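/- Let (μ, u) satisfy the sketched Galerkin condition Π_K^Θ (Au − μu) = 0 with u ∈ K. If Θ is an ε-embedding (ε<1) for V = K + AK, then ‖(A − μI)u‖ ≤ sqrt((1+ε)/(1−ε)) · ‖(I − Π_K) A Π_K‖ · ‖u‖. -/

import Mathlib

open scoped ComplexInnerProductSpace

noncomputable section

set_option maxHeartbeats 1000000 in
/-- Residual bound for a sketched Galerkin pair (μ, u). -/
theorem sketched_galerkin_residual_bound {n k : ℕ}
    (K : Submodule ℂ (EuclideanSpace ℂ (Fin n)))
    (A : EuclideanSpace ℂ (Fin n) →L[ℂ] EuclideanSpace ℂ (Fin n))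
    (Θ : EuclideanSpace ℂ (Fin n) →L[ℂ] EuclideanSpace ℂ (Fin k))
    (μ : ℂ) (u : EuclideanSpace ℂ (Fin n)) (hu : u ∈ K)
    (hGal : ∀ v ∈ K, ⟪Θ v, Θ (A u - μ • u)⟫ = 0)
    (ε : ℝ) (hε : ε < 1)
    (hemb : ∀ a ∈ K ⊔ K.map (A : EuclideanSpace ℂ (Fin n) →ₗ[ℂ] EuclideanSpace ℂ (Fin n)),
      ∀ b ∈ K ⊔ K.map (A : EuclideanSpace ℂ (Fin n) →ₗ[ℂ] EuclideanSpace ℂ (Fin n)),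
      ‖⟪a, b⟫ - ⟪Θ a, Θ b⟫‖ ≤ ε * ‖a‖ * ‖b‖) :
    ‖A u - μ • u‖ ≤ Real.sqrt ((1 + ε) / (1 - ε)) *
      ‖(ContinuousLinearMap.id ℂ (EuclideanSpace ℂ (Fin n)) -
          K.subtypeL.comp K.orthogonalProjection).comp
        (A.comp (K.subtypeL.comp K.orthogonalProjection))‖ * ‖u‖ := by
  by_cases hu0 : u = 0
  · rw [hu0]
    simp only [map_zero, smul_zero, sub_zero, norm_zero]
    positivity
  set T := K.subtypeL.comp K.orthogonalProjection with hT
  set B := (ContinuousLinearMap.id ℂ (EuclideanSpace ℂ (Fin n)) - T).comp (A.comp T) with hB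
  set r := A u - μ • u with hrdef
  set V := K ⊔ K.map (A : EuclideanSpace ℂ (Fin n) →ₗ[ℂ] EuclideanSpace ℂ (Fin n)) with hV
  have hTmem : ∀ x, T x ∈ K := fun x => (K.orthogonalProjection x).2
  have hTfix : ∀ x ∈ K, T x = x := fun x hx => by
    exact K.starProjection_eq_self_iff.mpr hx
  have hrV : r ∈ V := by
    have h1 : A u ∈ V := Submodule.mem_sup_right (Submodule.mem_map_of_mem hu)
    have h2 : μ • u ∈ V := Submodule.smul_mem _ _ (Submodule.mem_sup_left hu)
    exact Submodule.sub_mem _ h1 h2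
  set s := B u with hs
  have hTu : T u = u := hTfix u hu
  have hsr : s = r - T r := by
    have hTr : T r = T (A u) - μ • u := by rw [hrdef, map_sub, map_smul, hTu]
    rw [hs, hrdef, hTr]
    simp only [hB, ContinuousLinearMap.comp_apply, ContinuousLinearMap.sub_apply,
      ContinuousLinearMap.id_apply, hTu]
    abel
  have hsV : s ∈ V := by
    rw [hsr]
    exact Submodule.sub_mem _ hrV (Submodule.mem_sup_left (hTmem r))
  have hbound : ∀ x ∈ V, |‖x‖^2 - ‖Θ x‖^2| ≤ ε * ‖x‖^2 := by
    intro x hx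
    have h := hemb x hx x hx
    have hxx : ⟪x, x⟫ - ⟪Θ x, Θ x⟫ = ((‖x‖^2 - ‖Θ x‖^2 : ℝ) : ℂ) := by
      rw [inner_self_eq_norm_sq_to_K, inner_self_eq_norm_sq_to_K]; norm_cast
    rw [hxx, Complex.norm_real] at h
    calc |‖x‖^2 - ‖Θ x‖^2| ≤ ε * ‖x‖ * ‖x‖ := h
      _ = ε * ‖x‖^2 := by ring
  have hε0 : 0 ≤ ε := by
    have huV : u ∈ V := Submodule.mem_sup_left hu
    have h := hbound u huV
    have hun : 0 < ‖u‖ := norm_pos_iff.mpr hu0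
    by_contra hneg
    push_neg at hneg
    have hlt : ε * ‖u‖^2 < 0 := mul_neg_of_neg_of_pos hneg (by positivity)
    linarith [abs_nonneg (‖u‖^2 - ‖Θ u‖^2)]
  have horth : ⟪Θ r, Θ (T r)⟫ = 0 := by
    rw [← inner_conj_symm, hGal (T r) (hTmem r), map_zero]
  have hCS : ‖Θ r‖ ^ 2 ≤ ‖Θ r‖ * ‖Θ s‖ := by
    have heq : ⟪Θ r, Θ r⟫ = ⟪Θ r, Θ s⟫ := by
      have hΘ : Θ s = Θ r - Θ (T r) := by rw [hsr, map_sub]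
      rw [hΘ, inner_sub_right, horth, sub_zero]
    calc ‖Θ r‖ ^ 2 = ‖⟪Θ r, Θ r⟫‖ := by
            rw [inner_self_eq_norm_sq_to_K]; simp
      _ = ‖⟪Θ r, Θ s⟫‖ := by rw [heq]
      _ ≤ ‖Θ r‖ * ‖Θ s‖ := norm_inner_le_norm _ _
  have hΘrs : ‖Θ r‖ ≤ ‖Θ s‖ := by
    by_cases h : ‖Θ r‖ = 0
    · rw [h]; exact norm_nonneg _
    · have hpos : 0 < ‖Θ r‖ := lt_of_le_of_ne (norm_nonneg _) (Ne.symm h)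
      nlinarith
  have hlow : (1 - ε) * ‖r‖^2 ≤ ‖Θ r‖^2 := by
    have h := abs_le.mp (hbound r hrV)
    nlinarith [h.1, h.2]
  have hhigh : ‖Θ s‖^2 ≤ (1 + ε) * ‖s‖^2 := by
    have h := abs_le.mp (hbound s hsV)
    nlinarith [h.1, h.2]
  have h1ε : 0 < 1 - ε := by linarith
  have hkey : ‖r‖ ≤ Real.sqrt ((1 + ε) / (1 - ε)) * ‖s‖ := by
    have h2 : (1 - ε) * ‖r‖^2 ≤ (1 + ε) * ‖s‖^2 := by
      have : ‖Θ r‖^2 ≤ ‖Θ s‖^2 := by nlinarith [norm_nonneg (Θ r), norm_nonneg (Θ s)]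
      linarith
    have h3 : ‖r‖^2 ≤ ((1 + ε) / (1 - ε)) * ‖s‖^2 := by
      rw [div_mul_eq_mul_div, le_div_iff₀ h1ε]; nlinarith
    have h4 : ‖r‖ = Real.sqrt (‖r‖^2) := (Real.sqrt_sq (norm_nonneg r)).symm
    rw [h4]
    calc Real.sqrt (‖r‖^2) ≤ Real.sqrt (((1 + ε) / (1 - ε)) * ‖s‖^2) :=
          Real.sqrt_le_sqrt h3
      _ = Real.sqrt ((1 + ε) / (1 - ε)) * ‖s‖ := by
          rw [Real.sqrt_mul (by positivity), Real.sqrt_sq (norm_nonneg s)]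
  have hsB : ‖s‖ ≤ ‖B‖ * ‖u‖ := B.le_opNorm u
  calc ‖r‖ ≤ Real.sqrt ((1 + ε) / (1 - ε)) * ‖s‖ := hkey
    _ ≤ Real.sqrt ((1 + ε) / (1 - ε)) * (‖B‖ * ‖u‖) :=
        mul_le_mul_of_nonneg_left hsB (Real.sqrt_nonneg _)
    _ = Real.sqrt ((1 + ε) / (1 - ε)) * ‖B‖ * ‖u‖ := by ring
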